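/- Let K(x₁,x₂) = exp(−(x₁⁴+x₂⁴)/(2σ_K⁴)) and α(x,y) = exp(−((x₁−y₁)²+(x₂−y₂)²)/(2σ_α²)) · exp(c₁(x₁y₂−x₂y₁) + c₂(x₁(y₁−x₁)+x₂(y₂−x₂))), and let f(x,y) = 1 − α(x,y)K(x)/K(y) with selection gradient s(x) = ∇_y f(x,y)|_{y=x}. Then x* = (0,0) is a singular point (s(0,0) = 0), and the Jacobian matrix of s at (0,0) has eigenvalues −c₂ ± i·c₁. -/

import Mathlib

theorem stmt_10 (σK σα c₁ c₂ : ℝ) (hσK : 0 < σK) (hσα : 0 < σα)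
    (K : ℝ × ℝ → ℝ) (α f : ℝ × ℝ → ℝ × ℝ → ℝ) (s₁ s₂ : ℝ × ℝ → ℝ)
    (hK : ∀ x : ℝ × ℝ, K x = Real.exp (-(x.1^4 + x.2^4)/(2*σK^4)))
    (hα : ∀ x y : ℝ × ℝ, α x y =
      Real.exp (-((x.1 - y.1)^2 + (x.2 - y.2)^2)/(2*σα^2)) *
      Real.exp (c₁*(x.1*y.2 - x.2*y.1) + c₂*(x.1*(y.1 - x.1) + x.2*(y.2 - x.2))))
    (hf : ∀ x y, f x y = 1 - α x y * K x / K y)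
    (hs₁ : ∀ x, s₁ x = deriv (fun t => f x (t, x.2)) x.1)
    (hs₂ : ∀ x, s₂ x = deriv (fun t => f x (x.1, t)) x.2) :
    s₁ (0, 0) = 0 ∧ s₂ (0, 0) = 0 ∧
    Matrix.det
      ((Matrix.of ![![deriv (fun t => s₁ (t, 0)) 0, deriv (fun t => s₁ (0, t)) 0],
          ![deriv (fun t => s₂ (t, 0)) 0, deriv (fun t => s₂ (0, t)) 0]]).map Complex.ofReal
        - (-(c₂ : ℂ) + (c₁ : ℂ) * Complex.I) • 1) = 0 ∧
    Matrix.det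
      ((Matrix.of ![![deriv (fun t => s₁ (t, 0)) 0, deriv (fun t => s₁ (0, t)) 0],
          ![deriv (fun t => s₂ (t, 0)) 0, deriv (fun t => s₂ (0, t)) 0]]).map Complex.ofReal
        - (-(c₂ : ℂ) - (c₁ : ℂ) * Complex.I) • 1) = 0 := by
  have hσK4 : (σK : ℝ) ^ 4 ≠ 0 := by positivity
  -- closed form for s₁
  have key1 : ∀ x : ℝ × ℝ, s₁ x = c₁ * x.2 - c₂ * x.1 - 2 * x.1 ^ 3 / σK ^ 4 := by
    intro x
    obtain ⟨a, b⟩ := x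
    rw [hs₁]
    simp only
    have hfx : ∀ t : ℝ, f (a, b) (t, b) =
        1 - Real.exp (
          -((a - t) ^ 2 + (b - b) ^ 2) / (2 * σα ^ 2)
          + (c₁ * (a * b - b * t) + c₂ * (a * (t - a) + b * (b - b)))
          + (-(a ^ 4 + b ^ 4) / (2 * σK ^ 4))
          - (-(t ^ 4 + b ^ 4) / (2 * σK ^ 4))) := by
      intro t
      rw [hf, hα, hK, hK]
      simp only
      rw [← Real.exp_add, ← Real.exp_add, ← Real.exp_sub]
    simp only [hfx]
    have h1 : HasDerivAt (fun t : ℝ => -((a - t) ^ 2 + (b - b) ^ 2) / (2 * σα ^ 2))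
        (-((2 : ℕ) * (a - a) ^ 1 * (-1) + 0) / (2 * σα ^ 2)) a := by
      have hu : HasDerivAt (fun t : ℝ => a - t) (-1) a := (hasDerivAt_id a).const_sub a
      have := ((hu.pow 2).add_const ((b - b) ^ 2)).neg.div_const (2 * σα ^ 2)
      simpa using this
    have h2 : HasDerivAt (fun t : ℝ => c₁ * (a * b - b * t) + c₂ * (a * (t - a) + b * (b - b)))
        (c₁ * (-(b * 1)) + c₂ * (a * 1 + 0)) a := by
      have h2a : HasDerivAt (fun t : ℝ => a * b - b * t) (-(b * 1)) a :=
        ((hasDerivAt_id a).const_mul b).const_sub (a * b)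
      have h2b : HasDerivAt (fun t : ℝ => a * (t - a) + b * (b - b)) (a * 1 + 0) a := by
        have := (((hasDerivAt_id a).sub_const a).const_mul a).add_const (b * (b - b))
        simpa using this
      exact (h2a.const_mul c₁).add (h2b.const_mul c₂)
    have h3 : HasDerivAt (fun t : ℝ => -(t ^ 4 + b ^ 4) / (2 * σK ^ 4))
        (-((4 : ℕ) * a ^ 3 + 0) / (2 * σK ^ 4)) a := by
      have := ((hasDerivAt_pow 4 a).add_const (b ^ 4)).neg.div_const (2 * σK ^ 4)
      simpa using this
    have hE := ((h1.add h2).add_const (-(a ^ 4 + b ^ 4) / (2 * σK ^ 4))).sub h3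
    have hE0 : (-((a - a) ^ 2 + (b - b) ^ 2) / (2 * σα ^ 2)
          + (c₁ * (a * b - b * a) + c₂ * (a * (a - a) + b * (b - b)))
          + (-(a ^ 4 + b ^ 4) / (2 * σK ^ 4))
          - (-(a ^ 4 + b ^ 4) / (2 * σK ^ 4))) = 0 := by ring
    have hd := (hE.exp.const_sub 1).deriv
    simp only [Pi.add_apply, Pi.sub_apply] at hd
    rw [hd, hE0, Real.exp_zero]
    push_cast
    field_simp
    ring
  -- closed form for s₂
  have key2 : ∀ x : ℝ × ℝ, s₂ x = -c₁ * x.1 - c₂ * x.2 - 2 * x.2 ^ 3 / σK ^ 4 := by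
    intro x
    obtain ⟨a, b⟩ := x
    rw [hs₂]
    simp only
    have hfx : ∀ t : ℝ, f (a, b) (a, t) =
        1 - Real.exp (
          -((a - a) ^ 2 + (b - t) ^ 2) / (2 * σα ^ 2)
          + (c₁ * (a * t - b * a) + c₂ * (a * (a - a) + b * (t - b)))
          + (-(a ^ 4 + b ^ 4) / (2 * σK ^ 4))
          - (-(a ^ 4 + t ^ 4) / (2 * σK ^ 4))) := by
      intro t
      rw [hf, hα, hK, hK]
      simp only
      rw [← Real.exp_add, ← Real.exp_add, ← Real.exp_sub]
    simp only [hfx]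
    have h1 : HasDerivAt (fun t : ℝ => -((a - a) ^ 2 + (b - t) ^ 2) / (2 * σα ^ 2))
        (-(0 + (2 : ℕ) * (b - b) ^ 1 * (-1)) / (2 * σα ^ 2)) b := by
      have hu : HasDerivAt (fun t : ℝ => b - t) (-1) b := (hasDerivAt_id b).const_sub b
      have := (((hu.pow 2).const_add ((a - a) ^ 2))).neg.div_const (2 * σα ^ 2)
      simpa using this
    have h2 : HasDerivAt (fun t : ℝ => c₁ * (a * t - b * a) + c₂ * (a * (a - a) + b * (t - b)))
        (c₁ * (a * 1) + c₂ * (0 + b * 1)) b := by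
      have h2a : HasDerivAt (fun t : ℝ => a * t - b * a) (a * 1) b := by
        have := (((hasDerivAt_id b).const_mul a)).sub_const (b * a)
        simpa using this
      have h2b : HasDerivAt (fun t : ℝ => a * (a - a) + b * (t - b)) (0 + b * 1) b := by
        have := (((hasDerivAt_id b).sub_const b).const_mul b).const_add (a * (a - a))
        simpa using this
      exact (h2a.const_mul c₁).add (h2b.const_mul c₂)
    have h3 : HasDerivAt (fun t : ℝ => -(a ^ 4 + t ^ 4) / (2 * σK ^ 4))
        (-(0 + (4 : ℕ) * b ^ 3) / (2 * σK ^ 4)) b := by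
      have := ((hasDerivAt_pow 4 b).const_add (a ^ 4)).neg.div_const (2 * σK ^ 4)
      simpa using this
    have hE := ((h1.add h2).add_const (-(a ^ 4 + b ^ 4) / (2 * σK ^ 4))).sub h3
    have hE0 : (-((a - a) ^ 2 + (b - b) ^ 2) / (2 * σα ^ 2)
          + (c₁ * (a * b - b * a) + c₂ * (a * (a - a) + b * (b - b)))
          + (-(a ^ 4 + b ^ 4) / (2 * σK ^ 4))
          - (-(a ^ 4 + b ^ 4) / (2 * σK ^ 4))) = 0 := by ring
    have hd := (hE.exp.const_sub 1).deriv
    simp only [Pi.add_apply, Pi.sub_apply] at hd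
    rw [hd, hE0, Real.exp_zero]
    push_cast
    field_simp
    ring
  -- the four Jacobian entries
  have d11 : deriv (fun t => s₁ (t, 0)) 0 = -c₂ := by
    have hD : HasDerivAt (fun t : ℝ => c₁ * (0:ℝ) - c₂ * t - 2 * t ^ 3 / σK ^ 4)
        (-c₂) 0 := by
      have h1 : HasDerivAt (fun t : ℝ => c₁ * (0:ℝ) - c₂ * t) (-(c₂ * 1)) 0 :=
        ((hasDerivAt_id 0).const_mul c₂).const_sub (c₁ * 0)
      have h2 : HasDerivAt (fun t : ℝ => 2 * t ^ 3 / σK ^ 4)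
          ((2 * ((3:ℕ) * (0:ℝ) ^ 2)) / σK ^ 4) 0 :=
        ((hasDerivAt_pow 3 (0:ℝ)).const_mul 2).div_const (σK ^ 4)
      have := h1.sub h2
      simpa [Pi.sub_def] using this
    have : (fun t : ℝ => s₁ (t, 0)) = fun t : ℝ => c₁ * (0:ℝ) - c₂ * t - 2 * t ^ 3 / σK ^ 4 := by
      funext t; rw [key1]
    rw [this, hD.deriv]
  have d12 : deriv (fun t => s₁ (0, t)) 0 = c₁ := by
    have hD : HasDerivAt (fun t : ℝ => c₁ * t - c₂ * (0:ℝ) - 2 * (0:ℝ) ^ 3 / σK ^ 4) c₁ 0 := by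
      have h1 : HasDerivAt (fun t : ℝ => c₁ * t) (c₁ * 1) 0 := (hasDerivAt_id 0).const_mul c₁
      have := (h1.sub_const (c₂ * (0:ℝ))).sub_const (2 * (0:ℝ) ^ 3 / σK ^ 4)
      simpa using this
    have : (fun t : ℝ => s₁ (0, t)) = fun t : ℝ => c₁ * t - c₂ * (0:ℝ) - 2 * (0:ℝ) ^ 3 / σK ^ 4 := by
      funext t; rw [key1]
    rw [this, hD.deriv]
  have d21 : deriv (fun t => s₂ (t, 0)) 0 = -c₁ := by
    have hD : HasDerivAt (fun t : ℝ => -c₁ * t - c₂ * (0:ℝ) - 2 * (0:ℝ) ^ 3 / σK ^ 4) (-c₁) 0 := by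
      have h1 : HasDerivAt (fun t : ℝ => -c₁ * t) (-c₁ * 1) 0 := (hasDerivAt_id 0).const_mul (-c₁)
      have := (h1.sub_const (c₂ * (0:ℝ))).sub_const (2 * (0:ℝ) ^ 3 / σK ^ 4)
      simpa using this
    have : (fun t : ℝ => s₂ (t, 0)) = fun t : ℝ => -c₁ * t - c₂ * (0:ℝ) - 2 * (0:ℝ) ^ 3 / σK ^ 4 := by
      funext t; rw [key2]
    rw [this, hD.deriv]
  have d22 : deriv (fun t => s₂ (0, t)) 0 = -c₂ := by
    have hD : HasDerivAt (fun t : ℝ => -c₁ * (0:ℝ) - c₂ * t - 2 * t ^ 3 / σK ^ 4) (-c₂) 0 := by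
      have h1 : HasDerivAt (fun t : ℝ => -c₁ * (0:ℝ) - c₂ * t) (-(c₂ * 1)) 0 :=
        ((hasDerivAt_id 0).const_mul c₂).const_sub (-c₁ * 0)
      have h2 : HasDerivAt (fun t : ℝ => 2 * t ^ 3 / σK ^ 4)
          ((2 * ((3:ℕ) * (0:ℝ) ^ 2)) / σK ^ 4) 0 :=
        ((hasDerivAt_pow 3 (0:ℝ)).const_mul 2).div_const (σK ^ 4)
      have := h1.sub h2
      simpa [Pi.sub_def] using this
    have : (fun t : ℝ => s₂ (0, t)) = fun t : ℝ => -c₁ * (0:ℝ) - c₂ * t - 2 * t ^ 3 / σK ^ 4 := by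
      funext t; rw [key2]
    rw [this, hD.deriv]
  refine ⟨by rw [key1]; norm_num, by rw [key2]; norm_num, ?_, ?_⟩ <;>
  · rw [d11, d12, d21, d22]
    simp [Matrix.det_fin_two, Matrix.map_apply, Matrix.sub_apply, Matrix.smul_apply,
      Matrix.one_apply]
    ring_nf
    simp [Complex.I_sq]
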